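/- Let n ≥ 1 and let Ψ : ℝ^n → ℝ^n be a linear map with Ψ(L_n) ⊆ L_n, and suppose there exists an integer k ≥ 1 such that Ψ^k maps L_n \ {0} into the interior of L_n (i.e., Ψ is primitive). Then Ψ^n maps L_n \ {0} into the interior of L_n. -/

import Mathlib

open Metric Set
open scoped RealInnerProductSpace

/-- The `(n+1)`-dimensional Lorentz cone
`L_{n+1} = {x ∈ ℝ^{n+1} : x_{n+1} ≥ sqrt (x_1^2 + ⋯ + x_n^2)}`. -/
def lorentzCone (n : ℕ) : Set (EuclideanSpace ℝ (Fin (n + 1))) :=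
  {x | Real.sqrt (∑ i : Fin n, x (Fin.castSucc i) ^ 2) ≤ x (Fin.last n)}

namespace LorentzAux

variable {n : ℕ}

/-- truncation: forget the last coordinate. -/
def trunc (x : EuclideanSpace ℝ (Fin (n + 1))) : EuclideanSpace ℝ (Fin n) :=
  WithLp.toLp 2 (fun i : Fin n => x i.castSucc)

@[simp] lemma trunc_apply (x : EuclideanSpace ℝ (Fin (n + 1))) (i : Fin n) :
    trunc x i = x i.castSucc := rfl

/-- The Lorentz bilinear form. -/
def Bf (x y : EuclideanSpace ℝ (Fin (n + 1))) : ℝ :=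
  x (Fin.last n) * y (Fin.last n) - ∑ i : Fin n, x (Fin.castSucc i) * y (Fin.castSucc i)

/-- The Lorentz quadratic form. -/
def qf (x : EuclideanSpace ℝ (Fin (n + 1))) : ℝ := Bf x x

lemma Bf_symm (x y : EuclideanSpace ℝ (Fin (n + 1))) : Bf x y = Bf y x := by
  unfold Bf
  rw [mul_comm]
  congr 1
  exact Finset.sum_congr rfl fun i _ => mul_comm _ _

lemma norm_trunc (x : EuclideanSpace ℝ (Fin (n + 1))) :
    ‖trunc x‖ = Real.sqrt (∑ i : Fin n, x (Fin.castSucc i) ^ 2) := by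
  rw [EuclideanSpace.norm_eq]
  congr 1
  exact Finset.sum_congr rfl fun i _ => by
    rw [trunc_apply, Real.norm_eq_abs, sq_abs]

lemma inner_trunc (x y : EuclideanSpace ℝ (Fin (n + 1))) :
    ⟪trunc x, trunc y⟫ = ∑ i : Fin n, x (Fin.castSucc i) * y (Fin.castSucc i) := by
  rw [PiLp.inner_apply]
  exact Finset.sum_congr rfl fun i _ => by
    simp [RCLike.inner_apply, trunc_apply]; ring

lemma Bf_eq (x y : EuclideanSpace ℝ (Fin (n + 1))) :
    Bf x y = x (Fin.last n) * y (Fin.last n) - ⟪trunc x, trunc y⟫ := by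
  rw [inner_trunc]; rfl

lemma mem_iff (x : EuclideanSpace ℝ (Fin (n + 1))) :
    x ∈ lorentzCone n ↔ ‖trunc x‖ ≤ x (Fin.last n) := by
  rw [norm_trunc]; rfl

/-- The bilinear form as a bilinear map. -/
noncomputable def BL : EuclideanSpace ℝ (Fin (n + 1)) →ₗ[ℝ]
    EuclideanSpace ℝ (Fin (n + 1)) →ₗ[ℝ] ℝ :=
  LinearMap.mk₂ ℝ Bf
    (fun m x y => by
      simp only [Bf, PiLp.add_apply, add_mul, Finset.sum_add_distrib]; ring)
    (fun c m y => by
      simp only [Bf, PiLp.smul_apply, smul_eq_mul, mul_assoc, ← Finset.mul_sum]; ring)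
    (fun m x y => by
      simp only [Bf, PiLp.add_apply, mul_add, Finset.sum_add_distrib]; ring)
    (fun c m y => by
      simp only [Bf, PiLp.smul_apply, smul_eq_mul, mul_left_comm _ c, ← Finset.mul_sum]
      ring)

@[simp] lemma BL_apply (x y : EuclideanSpace ℝ (Fin (n + 1))) : BL x y = Bf x y := rfl

lemma interior_eq :
    interior (lorentzCone n) =
      {x : EuclideanSpace ℝ (Fin (n + 1)) | ‖trunc x‖ < x (Fin.last n)} := by
  apply Subset.antisymm
  · intro x hx
    have hxL : x ∈ lorentzCone n := interior_subset hx
    rw [mem_iff] at hxL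
    by_contra hlt
    simp only [mem_setOf_eq, not_lt] at hlt
    have heq : ‖trunc x‖ = x (Fin.last n) := le_antisymm hxL hlt
    obtain ⟨ε, hε, hball⟩ := Metric.mem_nhds_iff.mp (mem_interior_iff_mem_nhds.mp hx)
    set y := x - (ε/2) • EuclideanSpace.single (Fin.last n) (1:ℝ) with hy
    have hyx : dist y x = ε/2 := by
      rw [dist_eq_norm]
      have : y - x = -((ε/2) • EuclideanSpace.single (Fin.last n) (1:ℝ)) := by
        rw [hy]; abel
      rw [this, norm_neg, norm_smul, EuclideanSpace.norm_single]
      simp [abs_of_pos hε]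
    have hyL : y ∈ lorentzCone n := hball (by rw [mem_ball, hyx]; linarith)
    rw [mem_iff] at hyL
    have h1 : trunc y = trunc x := by
      ext i
      simp [hy, trunc_apply, PiLp.sub_apply, PiLp.smul_apply,
        EuclideanSpace.single_apply, (Fin.castSucc_lt_last i).ne]
    have h2 : y (Fin.last n) = x (Fin.last n) - ε/2 := by
      simp [hy, PiLp.sub_apply, PiLp.smul_apply, EuclideanSpace.single_apply]
    rw [h1, h2, heq] at hyL
    linarith
  · have hopen : IsOpen {x : EuclideanSpace ℝ (Fin (n + 1)) | ‖trunc x‖ < x (Fin.last n)} := by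
      apply isOpen_lt
      · have htr : Continuous fun x : EuclideanSpace ℝ (Fin (n + 1)) => trunc x := by
          refine (PiLp.continuous_toLp 2 _).comp
            (f := fun x : EuclideanSpace ℝ (Fin (n + 1)) => fun i : Fin n => x i.castSucc) ?_
          apply continuous_pi
          intro i
          exact (EuclideanSpace.proj (Fin.castSucc i)).continuous
        exact htr.norm
      · exact (EuclideanSpace.proj (Fin.last n)).continuous
    refine interior_maximal ?_ hopen
    intro x hx
    rw [mem_iff]
    exact le_of_lt hx

lemma qf_pos_of_interior {x : EuclideanSpace ℝ (Fin (n + 1))}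
    (hx : x ∈ interior (lorentzCone n)) : 0 < qf x := by
  rw [interior_eq] at hx
  have h0 : (0:ℝ) ≤ ‖trunc x‖ := norm_nonneg _
  have hx' : ‖trunc x‖ < x (Fin.last n) := hx
  have : ‖trunc x‖ * ‖trunc x‖ < x (Fin.last n) * x (Fin.last n) :=
    mul_lt_mul' (le_of_lt hx') hx' h0 (lt_of_le_of_lt h0 hx')
  have hinner : ⟪trunc x, trunc x⟫ = ‖trunc x‖ * ‖trunc x‖ := real_inner_self_eq_norm_mul_norm _
  have := hinner ▸ this
  rw [qf, Bf_eq]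
  linarith

lemma qf_eq_zero_of_boundary {x : EuclideanSpace ℝ (Fin (n + 1))}
    (hx : x ∈ lorentzCone n) (hx' : x ∉ interior (lorentzCone n)) : qf x = 0 := by
  rw [interior_eq] at hx'
  simp only [mem_setOf_eq, not_lt] at hx'
  rw [mem_iff] at hx
  have heq : ‖trunc x‖ = x (Fin.last n) := le_antisymm hx hx'
  rw [qf, Bf_eq, real_inner_self_eq_norm_mul_norm, heq]
  ring

lemma zero_not_interior : (0 : EuclideanSpace ℝ (Fin (n + 1))) ∉ interior (lorentzCone n) := by
  rw [interior_eq]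
  intro h
  have h' : ‖trunc (0 : EuclideanSpace ℝ (Fin (n + 1)))‖ <
      (0 : EuclideanSpace ℝ (Fin (n + 1))) (Fin.last n) := h
  have h1 : trunc (0 : EuclideanSpace ℝ (Fin (n + 1))) = 0 := by
    ext i; simp [trunc_apply]
  have h2 : (0 : EuclideanSpace ℝ (Fin (n + 1))) (Fin.last n) = 0 := rfl
  rw [h1, h2, norm_zero] at h'
  exact lt_irrefl 0 h'

lemma mem_or_neg_mem {w : EuclideanSpace ℝ (Fin (n + 1))} (h : 0 ≤ qf w) :
    w ∈ lorentzCone n ∨ -w ∈ lorentzCone n := by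
  have h1 : ‖trunc w‖ * ‖trunc w‖ ≤ w (Fin.last n) * w (Fin.last n) := by
    have := h
    rw [qf, Bf_eq, real_inner_self_eq_norm_mul_norm] at this
    linarith
  have h2 : ‖trunc w‖ ≤ |w (Fin.last n)| := by
    have hs : ‖trunc w‖ ^ 2 ≤ w (Fin.last n) ^ 2 := by rw [sq, sq]; exact h1
    calc ‖trunc w‖ = Real.sqrt (‖trunc w‖ ^ 2) := (Real.sqrt_sq (norm_nonneg _)).symm
      _ ≤ Real.sqrt (w (Fin.last n) ^ 2) := Real.sqrt_le_sqrt hs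
      _ = |w (Fin.last n)| := Real.sqrt_sq_eq_abs _
  rcases le_or_gt 0 (w (Fin.last n)) with hw | hw
  · left
    rw [mem_iff]
    rwa [abs_of_nonneg hw] at h2
  · right
    rw [mem_iff]
    have htr : trunc (-w) = -(trunc w) := by
      ext i; simp [trunc_apply, PiLp.neg_apply]
    have hl : (-w) (Fin.last n) = -(w (Fin.last n)) := by simp [PiLp.neg_apply]
    rw [htr, hl, norm_neg]
    rwa [abs_of_neg hw] at h2

lemma Bf_nonneg {x y : EuclideanSpace ℝ (Fin (n + 1))}
    (hx : x ∈ lorentzCone n) (hy : y ∈ lorentzCone n) : 0 ≤ Bf x y := by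
  rw [mem_iff] at hx hy
  have h1 : ⟪trunc x, trunc y⟫ ≤ ‖trunc x‖ * ‖trunc y‖ := real_inner_le_norm _ _
  have h2 : ‖trunc x‖ * ‖trunc y‖ ≤ x (Fin.last n) * y (Fin.last n) :=
    mul_le_mul hx hy (norm_nonneg _) (le_trans (norm_nonneg _) hx)
  rw [Bf_eq]
  linarith

lemma smul_mem {c : ℝ} {x : EuclideanSpace ℝ (Fin (n + 1))} (hc : 0 ≤ c)
    (hx : x ∈ lorentzCone n) : c • x ∈ lorentzCone n := by
  rw [mem_iff] at hx ⊢
  have htr : trunc (c • x) = c • trunc x := by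
    ext i; simp [trunc_apply, PiLp.smul_apply]
  have hl : (c • x) (Fin.last n) = c * x (Fin.last n) := by simp [PiLp.smul_apply]
  rw [htr, hl, norm_smul, Real.norm_eq_abs, abs_of_nonneg hc]
  exact mul_le_mul_of_nonneg_left hx hc

lemma eq_smul_of_Bf_eq_zero {v w : EuclideanSpace ℝ (Fin (n + 1))}
    (hv : v ∈ lorentzCone n) (hw : w ∈ lorentzCone n) (hqw : qf w = 0) (hw0 : w ≠ 0)
    (hB : Bf v w = 0) : ∃ t : ℝ, 0 ≤ t ∧ v = t • w := by
  have hv' := (mem_iff v).mp hv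
  have hw' := (mem_iff w).mp hw
  have hq' : w (Fin.last n) * w (Fin.last n) - ‖trunc w‖ * ‖trunc w‖ = 0 := by
    have := hqw
    rwa [qf, Bf_eq, real_inner_self_eq_norm_mul_norm] at this
  have hwl : w (Fin.last n) = ‖trunc w‖ := by
    nlinarith [norm_nonneg (trunc w), hw']
  have hwlpos : 0 < w (Fin.last n) := by
    rcases lt_or_eq_of_le (le_trans (norm_nonneg (trunc w)) hw') with h | h
    · exact h
    · exfalso
      apply hw0
      have htw : ‖trunc w‖ = 0 := by rw [← hwl]; exact h.symm
      have htw0 : trunc w = 0 := norm_eq_zero.mp htw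
      ext i
      refine Fin.lastCases ?_ ?_ i
      · exact h.symm
      · intro j
        have := PiLp.ext_iff.mp htw0 j
        simpa [trunc_apply] using this
  have hcs : ⟪trunc v, trunc w⟫ ≤ ‖trunc v‖ * ‖trunc w‖ := real_inner_le_norm _ _
  have hBv : ⟪trunc v, trunc w⟫ = v (Fin.last n) * w (Fin.last n) := by
    have := hB
    rw [Bf_eq] at this
    linarith
  have hnv : ‖trunc v‖ = v (Fin.last n) := by
    have hlow : v (Fin.last n) * ‖trunc w‖ ≤ ‖trunc v‖ * ‖trunc w‖ := by
      calc v (Fin.last n) * ‖trunc w‖ = v (Fin.last n) * w (Fin.last n) := by rw [hwl]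
        _ = ⟪trunc v, trunc w⟫ := hBv.symm
        _ ≤ ‖trunc v‖ * ‖trunc w‖ := hcs
    have hup : ‖trunc v‖ * ‖trunc w‖ ≤ v (Fin.last n) * ‖trunc w‖ :=
      mul_le_mul_of_nonneg_right hv' (norm_nonneg _)
    have hne : ‖trunc w‖ ≠ 0 := by rw [← hwl]; exact hwlpos.ne'
    exact mul_right_cancel₀ hne (le_antisymm hup hlow)
  have heq : ⟪trunc v, trunc w⟫ = ‖trunc v‖ * ‖trunc w‖ := by
    rw [hnv, ← hwl]; exact hBv
  have hpar : ‖trunc w‖ • trunc v = ‖trunc v‖ • trunc w :=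
    inner_eq_norm_mul_iff_real.mp heq
  refine ⟨v (Fin.last n) / w (Fin.last n), ?_, ?_⟩
  · apply div_nonneg _ hwlpos.le
    rw [← hnv]; exact norm_nonneg _
  · ext i
    refine Fin.lastCases ?_ ?_ i
    · show v (Fin.last n) = ((v (Fin.last n) / w (Fin.last n)) • w) (Fin.last n)
      rw [PiLp.smul_apply, smul_eq_mul]
      field_simp
    · intro j
      have hj := PiLp.ext_iff.mp hpar j
      rw [PiLp.smul_apply, PiLp.smul_apply, smul_eq_mul, smul_eq_mul] at hj
      rw [← hwl, hnv] at hj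
      show v (Fin.castSucc j) = ((v (Fin.last n) / w (Fin.last n)) • w) (Fin.castSucc j)
      rw [PiLp.smul_apply, smul_eq_mul]
      have htv : trunc v j = v (Fin.castSucc j) := rfl
      have htw : trunc w j = w (Fin.castSucc j) := rfl
      rw [htv, htw] at hj
      field_simp
      linarith [hj]

lemma ray_of {v w : EuclideanSpace ℝ (Fin (n + 1))}
    (hw : w ∈ lorentzCone n) (hqw : qf w = 0) (hw0 : w ≠ 0)
    (hv : v ∈ lorentzCone n) (hsub : w - v ∈ lorentzCone n) :
    ∃ c : ℝ, 0 ≤ c ∧ v = c • w := by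
  have h1 : 0 ≤ Bf v w := Bf_nonneg hv hw
  have h2 : 0 ≤ Bf (w - v) w := Bf_nonneg hsub hw
  have h3 : Bf (w - v) w = qf w - Bf v w := by
    show BL (w - v) w = BL w w - BL v w
    rw [map_sub, LinearMap.sub_apply]
  have hB : Bf v w = 0 := by
    rw [h3, hqw] at h2
    linarith
  exact eq_smul_of_Bf_eq_zero hv hw hqw hw0 hB

lemma qf_smul (c : ℝ) (x : EuclideanSpace ℝ (Fin (n + 1))) : qf (c • x) = c ^ 2 * qf x := by
  show BL (c • x) (c • x) = c ^ 2 * BL x x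
  simp only [map_smul, LinearMap.smul_apply, smul_eq_mul]
  ring

lemma qf_neg (x : EuclideanSpace ℝ (Fin (n + 1))) : qf (-x) = qf x := by
  show BL (-x) (-x) = BL x x
  simp only [map_neg, LinearMap.neg_apply, neg_neg]

section Dyn

variable (Ψ : Module.End ℝ (EuclideanSpace ℝ (Fin (n + 1))))
  (hpos : ∀ x ∈ lorentzCone n, Ψ x ∈ lorentzCone n)

/-- iterates stay in the cone -/
lemma pow_mem (hpos : ∀ x ∈ lorentzCone n, Ψ x ∈ lorentzCone n) (m : ℕ)
    {x : EuclideanSpace ℝ (Fin (n + 1))} (hx : x ∈ lorentzCone n) :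
    (Ψ ^ m) x ∈ lorentzCone n := by
  induction m with
  | zero => simpa using hx
  | succ m ih =>
    have : (Ψ ^ (m + 1)) x = Ψ ((Ψ ^ m) x) := by
      rw [pow_succ']; rfl
    rw [this]
    exact hpos _ ih

/-- a primitive positive map preserves the interior. -/
lemma interior_stable (hpos : ∀ x ∈ lorentzCone n, Ψ x ∈ lorentzCone n)
    {k : ℕ} (hk : 1 ≤ k)
    (hstrict : ∀ x ∈ lorentzCone n, x ≠ 0 → (Ψ ^ k) x ∈ interior (lorentzCone n))
    {z : EuclideanSpace ℝ (Fin (n + 1))} (hz : z ∈ interior (lorentzCone n)) :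
    Ψ z ∈ interior (lorentzCone n) := by
  have hzL : z ∈ lorentzCone n := interior_subset hz
  have hz0 : z ≠ 0 := fun h => zero_not_interior (h ▸ hz)
  by_contra hcon
  have hΨzL : Ψ z ∈ lorentzCone n := hpos z hzL
  obtain ⟨k', rfl⟩ : ∃ k', k = k' + 1 := ⟨k - 1, (Nat.succ_pred_eq_of_pos hk).symm⟩
  by_cases h0 : Ψ z = 0
  · have hzero : (Ψ ^ (k' + 1)) z = 0 := by
      have : (Ψ ^ (k' + 1)) z = (Ψ ^ k') (Ψ z) := by rw [pow_succ]; rfl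
      rw [this, h0, map_zero]
    exact zero_not_interior (hzero ▸ hstrict z hzL hz0)
  · have hq0 : qf (Ψ z) = 0 := qf_eq_zero_of_boundary hΨzL hcon
    have key : ∀ y ∈ lorentzCone n, ∃ c : ℝ, 0 ≤ c ∧ Ψ y = c • Ψ z := by
      intro y hy
      obtain ⟨ε, hε, hball⟩ := Metric.mem_nhds_iff.mp (mem_interior_iff_mem_nhds.mp hz)
      set δ := ε / (2 * (‖y‖ + 1)) with hδ
      have hypos : (0:ℝ) < ‖y‖ + 1 := by positivity
      have hδpos : 0 < δ := by positivity
      have hmem : z - δ • y ∈ lorentzCone n := by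
        apply hball
        rw [mem_ball, dist_eq_norm]
        have hzz : z - δ • y - z = -(δ • y) := by abel
        rw [hzz, norm_neg, norm_smul, Real.norm_eq_abs, abs_of_pos hδpos]
        rw [hδ, div_mul_eq_mul_div, div_lt_iff₀ (by positivity)]
        nlinarith [norm_nonneg y, hε]
      have hsub : Ψ z - δ • Ψ y ∈ lorentzCone n := by
        have := hpos _ hmem
        rwa [map_sub, map_smul] at this
      obtain ⟨c, hc, hceq⟩ := ray_of hΨzL hq0 h0
        (smul_mem (le_of_lt hδpos) (hpos y hy)) hsub
      refine ⟨c / δ, div_nonneg hc hδpos.le, ?_⟩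
      have h5 : δ⁻¹ • (δ • Ψ y) = δ⁻¹ • (c • Ψ z) := by rw [hceq]
      rw [smul_smul, smul_smul, inv_mul_cancel₀ hδpos.ne', one_smul] at h5
      rw [h5, div_eq_inv_mul]
    have hyL : (Ψ ^ k') z ∈ lorentzCone n := pow_mem Ψ hpos k' hzL
    obtain ⟨c, hc, hceq⟩ := key _ hyL
    have hkz : (Ψ ^ (k' + 1)) z = c • Ψ z := by
      have h6 : (Ψ ^ (k' + 1)) z = Ψ ((Ψ ^ k') z) := by rw [pow_succ']; rfl
      rw [h6, hceq]
    have hint := hstrict z hzL hz0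
    rw [hkz] at hint
    have hq1 : qf (c • Ψ z) = 0 := by rw [qf_smul, hq0]; ring
    have := qf_pos_of_interior hint
    rw [hq1] at this
    exact lt_irrefl 0 this

/-- the triple inequality (ratio monotonicity). -/
lemma triple (hpos : ∀ x ∈ lorentzCone n, Ψ x ∈ lorentzCone n)
    {u v z : EuclideanSpace ℝ (Fin (n + 1))}
    (hu : u ∈ lorentzCone n) (hv : v ∈ lorentzCone n) (hz : z ∈ lorentzCone n)
    (hqu : qf u = 0) (hqv : qf v = 0) (hqz : qf z = 0)
    (hqu' : qf (Ψ u) = 0) (hqv' : qf (Ψ v) = 0) (hqz' : qf (Ψ z) = 0)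
    (hBuv : 0 < Bf u v) :
    Bf (Ψ u) (Ψ z) * Bf u v ≤ Bf (Ψ u) (Ψ v) * Bf u z := by
  have hγ : 0 ≤ Bf u z := Bf_nonneg hu hz
  have hδ : 0 ≤ Bf v z := Bf_nonneg hv hz
  have hβ' : 0 ≤ Bf (Ψ u) (Ψ v) := Bf_nonneg (hpos u hu) (hpos v hv)
  have hγ' : 0 ≤ Bf (Ψ u) (Ψ z) := Bf_nonneg (hpos u hu) (hpos z hz)
  have hδ' : 0 ≤ Bf (Ψ v) (Ψ z) := Bf_nonneg (hpos v hv) (hpos z hz)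
  have expand : ∀ (a b : ℝ) (p q r : EuclideanSpace ℝ (Fin (n + 1))),
      qf (a • p + b • q - r) = a ^ 2 * qf p + b ^ 2 * qf q + qf r
        + 2 * a * b * Bf p q - 2 * a * Bf p r - 2 * b * Bf q r := by
    intro a b p q r
    show BL (a • p + b • q - r) (a • p + b • q - r) = _
    simp only [map_add, map_sub, map_smul, LinearMap.add_apply, LinearMap.sub_apply,
      LinearMap.smul_apply, smul_eq_mul, BL_apply]
    rw [Bf_symm q p, Bf_symm r p, Bf_symm r q]
    show _ = a ^ 2 * Bf p p + b ^ 2 * Bf q q + Bf r r + _ - _ - _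
    ring
  set β := Bf u v with hβdef
  set γ := Bf u z with hγdef
  set δ := Bf v z with hδdef
  set β' := Bf (Ψ u) (Ψ v) with hβ'def
  set γ' := Bf (Ψ u) (Ψ z) with hγ'def
  set δ' := Bf (Ψ v) (Ψ z) with hδ'def
  have main : ∀ a : ℝ, δ / β < a → -(γ' * δ) ≤ a * (γ * β' - γ' * β) := by
    intro a ha
    have ha0 : 0 < a := lt_of_le_of_lt (div_nonneg hδ (le_of_lt hBuv)) ha
    have hden : 0 < a * β - δ := by
      rw [div_lt_iff₀ hBuv] at ha; linarith
    set b := a * γ / (a * β - δ) with hb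
    have hbb : b * (a * β - δ) = a * γ := by
      rw [hb]; field_simp
    have hb0 : 0 ≤ b := div_nonneg (mul_nonneg ha0.le hγ) hden.le
    have hw : qf (a • u + b • v - z) = 0 := by
      rw [expand, hqu, hqv, hqz]
      linear_combination (2:ℝ) * hbb
    have hΨw : 0 ≤ qf (Ψ (a • u + b • v - z)) := by
      rcases mem_or_neg_mem (le_of_eq hw.symm) with hmem | hmem
      · exact Bf_nonneg (hpos _ hmem) (hpos _ hmem)
      · have h1 := hpos _ hmem
        rw [map_neg] at h1
        have h2 : 0 ≤ qf (-(Ψ (a • u + b • v - z))) := Bf_nonneg h1 h1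
        rwa [qf_neg] at h2
    have hΨw' : qf (Ψ (a • u + b • v - z)) = 2 * a * b * β' - 2 * a * γ' - 2 * b * δ' := by
      simp only [map_add, map_sub, map_smul]
      rw [expand, hqu', hqv', hqz']
      ring
    rw [hΨw'] at hΨw
    have h6 : a * γ' ≤ a * (b * β') := by nlinarith [mul_nonneg hb0 hδ']
    have h7 : γ' ≤ b * β' := le_of_mul_le_mul_left h6 ha0
    have h8 : γ' * (a * β - δ) ≤ a * γ * β' := by
      calc γ' * (a * β - δ) ≤ b * β' * (a * β - δ) :=
            mul_le_mul_of_nonneg_right h7 hden.le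
        _ = b * (a * β - δ) * β' := by ring
        _ = a * γ * β' := by rw [hbb]
    nlinarith [h8]
  by_contra hcon
  push_neg at hcon
  set D := γ * β' - γ' * β with hD
  have hDneg : D < 0 := by rw [hD]; nlinarith [hcon]
  set a := max (δ / β + 1) ((γ' * δ + 1) / (-D)) with haa
  have ha1 : δ / β < a := lt_of_lt_of_le (lt_add_one _) (le_max_left _ _)
  have h9 := main a ha1
  have ha2 : (γ' * δ + 1) / (-D) ≤ a := le_max_right _ _
  have h10 : γ' * δ + 1 ≤ a * (-D) := by
    rw [div_le_iff₀ (by linarith)] at ha2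
    linarith [ha2]
  have h11 : a * (-D) = -(a * D) := by ring
  rw [h11] at h10
  linarith

end Dyn

end LorentzAux

/-- Any primitive map of the `(n+1)`-dimensional Lorentz cone (`n + 1 ≥ 1`) has
primitivity index at most `n + 1`. -/
theorem lorentzCone_primitivity_index_le
    (n : ℕ) (Ψ : Module.End ℝ (EuclideanSpace ℝ (Fin (n + 1))))
    (hpos : ∀ x ∈ lorentzCone n, Ψ x ∈ lorentzCone n)
    (hprim : ∃ k : ℕ, 1 ≤ k ∧
      ∀ x ∈ lorentzCone n, x ≠ 0 → (Ψ ^ k) x ∈ interior (lorentzCone n)) :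
    ∀ x ∈ lorentzCone n, x ≠ 0 → (Ψ ^ (n + 1)) x ∈ interior (lorentzCone n) := by
  classical
  open LorentzAux in
  obtain ⟨k, hk1, hstrict⟩ := hprim
  intro x₀ hx₀L hx₀0
  by_contra hnot
  set x : ℕ → EuclideanSpace ℝ (Fin (n + 1)) := fun m => (Ψ ^ m) x₀ with hxdef
  have hx0 : x 0 = x₀ := by rw [hxdef]; simp
  have hxsucc : ∀ m, x (m + 1) = Ψ (x m) := by
    intro m
    rw [hxdef]
    show (Ψ ^ (m + 1)) x₀ = Ψ ((Ψ ^ m) x₀)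
    rw [pow_succ']
    rfl
  have hxL : ∀ m, x m ∈ lorentzCone n := fun m => pow_mem Ψ hpos m hx₀L
  have hmono : ∀ m s, x m ∈ interior (lorentzCone n) → x (m + s) ∈ interior (lorentzCone n) := by
    intro m s hm
    induction s with
    | zero => exact hm
    | succ s ih =>
      have : x (m + (s + 1)) = Ψ (x (m + s)) := by rw [← hxsucc]; ring_nf
      rw [this]
      exact interior_stable Ψ hpos hk1 hstrict ih
  have hnotint : ∀ m, m ≤ n + 1 → x m ∉ interior (lorentzCone n) := by
    intro m hm hmint
    apply hnot
    have := hmono m (n + 1 - m) hmint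
    rw [show m + (n + 1 - m) = n + 1 by omega] at this
    exact this
  have hq0 : ∀ m, m ≤ n + 1 → qf (x m) = 0 := fun m hm =>
    qf_eq_zero_of_boundary (hxL m) (hnotint m hm)
  set S : ℕ → Submodule ℝ (EuclideanSpace ℝ (Fin (n + 1))) :=
    fun m => Submodule.span ℝ (Set.range fun i : Fin m => x ↑i) with hS
  have hSdef : ∀ m, S m = Submodule.span ℝ (Set.range fun i : Fin m => x ↑i) :=
    fun m => by rw [hS]
  have haux : ∀ m : ℕ, (∀ j, j < m → x j ∉ S j) →
      LinearIndependent ℝ (fun i : Fin m => x ↑i) := by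
    intro m
    induction m with
    | zero => intro _; exact linearIndependent_empty_type
    | succ m ih =>
      intro hnm
      have heq : (fun i : Fin (m + 1) => x ↑i) =
          Fin.snoc (fun i : Fin m => x ↑i) (x m) := by
        funext i
        refine Fin.lastCases ?_ ?_ i
        · rw [Fin.snoc_last, Fin.val_last]
        · intro j
          rw [Fin.snoc_castSucc, Fin.coe_castSucc]
      rw [heq, linearIndependent_fin_snoc]
      refine ⟨ih fun j hj => hnm j (by omega), ?_⟩
      have h := hnm m (by omega)
      rwa [hSdef] at h
  have hPex' : ∃ m, x m ∈ S m := by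
    by_contra hno
    push_neg at hno
    have hli2 := haux (n + 2) fun j _ => hno j
    have hcard := hli2.fintype_card_le_finrank
    rw [Fintype.card_fin, finrank_euclideanSpace_fin] at hcard
    omega
  set r := Nat.find hPex' with hr
  have hrP : x r ∈ S r := Nat.find_spec hPex'
  have hrmin : ∀ j, j < r → x j ∉ S j := fun j hj => Nat.find_min hPex' hj
  have hrle : r ≤ n + 1 := by
    -- the n+2 vectors x 0 .. x (n+1) are dependent, so some j ≤ n+1 has x j ∈ S j
    by_contra hgt
    push_neg at hgt
    have hli2 := haux (n + 2) fun j hj => hrmin j (by omega)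
    have hcard := hli2.fintype_card_le_finrank
    rw [Fintype.card_fin, finrank_euclideanSpace_fin] at hcard
    omega
  have hr1 : 1 ≤ r := by
    by_contra h
    push_neg at h
    have hr0 : r = 0 := by omega
    rw [hr0, hSdef] at hrP
    have hx00 : x 0 = 0 := by
      have hrange : (Set.range fun i : Fin 0 => x ↑i) = ∅ := Set.range_eq_empty _
      rw [hrange, Submodule.span_empty, Submodule.mem_bot] at hrP
      exact hrP
    exact hx₀0 (by rw [← hx0]; exact hx00)
  have hli : LinearIndependent ℝ (fun i : Fin r => x ↑i) := haux r hrmin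
  -- invariance of W = S r
  have hgen : ∀ i : Fin r, Ψ (x ↑i) ∈ S r := by
    intro i
    rw [← hxsucc]
    rcases lt_or_eq_of_le (Nat.succ_le_of_lt i.isLt) with h | h
    · rw [hSdef]
      exact Submodule.subset_span ⟨⟨↑i + 1, h⟩, rfl⟩
    · have h' : (↑i : ℕ) + 1 = r := by omega
      rw [h']
      exact hrP
  have hWinv : ∀ w ∈ S r, Ψ w ∈ S r := by
    intro w hw
    have hmap : Submodule.map Ψ (S r) ≤ S r := by
      rw [hSdef, Submodule.map_span, Submodule.span_le]
      rintro y ⟨y', ⟨i, rfl⟩, rfl⟩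
      exact hgen i
    exact hmap ⟨w, hw, rfl⟩
  have hxW : ∀ m, x m ∈ S r := by
    intro m
    induction m with
    | zero =>
      rw [hSdef]
      exact Submodule.subset_span ⟨⟨0, hr1⟩, rfl⟩
    | succ m ih =>
      rw [hxsucc]
      exact hWinv _ ih
  -- pairwise positivity on the basis
  have hqlt : ∀ i : Fin r, qf (x ↑i) = 0 := fun i => hq0 _ (by have := i.isLt; omega)
  have hqlt' : ∀ i : Fin r, qf (x (↑i + 1)) = 0 := fun i => hq0 _ (by have := i.isLt; omega)
  have hBpos : ∀ i j : Fin r, i ≠ j → 0 < Bf (x ↑i) (x ↑j) := by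
    intro i j hij
    have hge : 0 ≤ Bf (x ↑i) (x ↑j) := Bf_nonneg (hxL _) (hxL _)
    rcases lt_or_eq_of_le hge with h | h
    · exact h
    · exfalso
      have hxj0 : x ↑j ≠ 0 := hli.ne_zero j
      obtain ⟨t, _, hteq⟩ :=
        eq_smul_of_Bf_eq_zero (hxL ↑i) (hxL ↑j) (hqlt j) hxj0 h.symm
      have hsum : ∑ m : Fin r,
          (if m = i then (1:ℝ) else if m = j then -t else 0) • x ↑m = 0 := by
        have hsplit : ∀ m : Fin r,
            (if m = i then (1:ℝ) else if m = j then -t else 0) • x ↑m =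
              (if m = i then x ↑i else 0) + (if m = j then (-t) • x ↑j else 0) := by
          intro m
          by_cases h1 : m = i
          · have h2 : m ≠ j := by rw [h1]; exact hij
            rw [if_pos h1, if_pos h1, if_neg h2, h1, one_smul, add_zero]
          · by_cases h2 : m = j
            · rw [if_neg h1, if_pos h2, if_neg h1, if_pos h2, h2, zero_add]
            · rw [if_neg h1, if_neg h2, if_neg h1, if_neg h2, zero_smul, add_zero]
        rw [Finset.sum_congr rfl fun m _ => hsplit m, Finset.sum_add_distrib]
        rw [Finset.sum_ite_eq' Finset.univ i fun _ => x ↑i]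
        rw [Finset.sum_ite_eq' Finset.univ j fun _ => (-t) • x ↑j]
        simp only [Finset.mem_univ, if_true]
        rw [hteq, ← add_smul]
        simp
      have hzero := Fintype.linearIndependent_iff.mp hli _ hsum i
      simp at hzero
  have hqψ : ∀ i : Fin r, qf (Ψ (x ↑i)) = 0 := by
    intro i
    rw [← hxsucc]
    exact hqlt' i
  -- the triple inequality, as equalities of cross ratios
  have hEQ : ∀ a b c : Fin r, a ≠ b → a ≠ c → b ≠ c →
      Bf (x (↑a + 1)) (x (↑b + 1)) * Bf (x ↑a) (x ↑c) =
        Bf (x (↑a + 1)) (x (↑c + 1)) * Bf (x ↑a) (x ↑b) := by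
    intro a b c hab hac hbc
    have h1 := triple Ψ hpos (hxL ↑a) (hxL ↑b) (hxL ↑c)
      (hqlt a) (hqlt b) (hqlt c) (hqψ a) (hqψ b) (hqψ c) (hBpos a b hab)
    have h2 := triple Ψ hpos (hxL ↑a) (hxL ↑c) (hxL ↑b)
      (hqlt a) (hqlt c) (hqlt b) (hqψ a) (hqψ c) (hqψ b) (hBpos a c hac)
    rw [hxsucc ↑a, hxsucc ↑b, hxsucc ↑c]
    exact le_antisymm h2 h1
  -- a single ratio μ
  have hKey : ∃ μ : ℝ, ∀ i j : Fin r,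
      Bf (x (↑i + 1)) (x (↑j + 1)) = μ * Bf (x ↑i) (x ↑j) := by
    by_cases hr2 : 2 ≤ r
    · set i0 : Fin r := ⟨0, by omega⟩ with hi0
      set i1 : Fin r := ⟨1, by omega⟩ with hi1
      have hne01 : i0 ≠ i1 := by
        intro h; rw [hi0, hi1] at h; exact absurd (congrArg Fin.val h) (by simp)
      have hB01 : 0 < Bf (x ↑i0) (x ↑i1) := hBpos i0 i1 hne01
      set μ := Bf (x (↑i0 + 1)) (x (↑i1 + 1)) / Bf (x ↑i0) (x ↑i1) with hμ
      -- helper: pairs containing i0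
      have hP0 : ∀ i : Fin r, i ≠ i0 →
          Bf (x (↑i0 + 1)) (x (↑i + 1)) * Bf (x ↑i0) (x ↑i1) =
            Bf (x (↑i0 + 1)) (x (↑i1 + 1)) * Bf (x ↑i0) (x ↑i) := by
        intro i hi
        by_cases h : i = i1
        · subst h; ring
        · exact hEQ i0 i i1 (Ne.symm hi) hne01 h
      have hP0' : ∀ i : Fin r, i ≠ i0 →
          Bf (x (↑i + 1)) (x (↑i0 + 1)) * Bf (x ↑i0) (x ↑i1) =
            Bf (x (↑i0 + 1)) (x (↑i1 + 1)) * Bf (x ↑i) (x ↑i0) := by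
        intro i hi
        rw [Bf_symm (x (↑i + 1)) (x (↑i0 + 1)), Bf_symm (x ↑i) (x ↑i0)]
        exact hP0 i hi
      have hP2 : ∀ i j : Fin r, i ≠ j →
          Bf (x (↑i + 1)) (x (↑j + 1)) * Bf (x ↑i0) (x ↑i1) =
            Bf (x (↑i0 + 1)) (x (↑i1 + 1)) * Bf (x ↑i) (x ↑j) := by
        intro i j hij
        by_cases hii0 : i = i0
        · subst hii0; exact hP0 j (Ne.symm hij)
        · by_cases hji0 : j = i0
          · subst hji0; exact hP0' i hii0
          · have h1 := hEQ i j i0 hij hii0 hji0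
            have h2 := hP0' i hii0
            have hne : Bf (x ↑i) (x ↑i0) ≠ 0 := (hBpos i i0 hii0).ne'
            apply mul_left_cancel₀ hne
            calc Bf (x ↑i) (x ↑i0) *
                  (Bf (x (↑i + 1)) (x (↑j + 1)) * Bf (x ↑i0) (x ↑i1))
                = (Bf (x (↑i + 1)) (x (↑j + 1)) * Bf (x ↑i) (x ↑i0)) *
                    Bf (x ↑i0) (x ↑i1) := by ring
              _ = (Bf (x (↑i + 1)) (x (↑i0 + 1)) * Bf (x ↑i) (x ↑j)) *
                    Bf (x ↑i0) (x ↑i1) := by rw [h1]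
              _ = (Bf (x (↑i + 1)) (x (↑i0 + 1)) * Bf (x ↑i0) (x ↑i1)) *
                    Bf (x ↑i) (x ↑j) := by ring
              _ = (Bf (x (↑i0 + 1)) (x (↑i1 + 1)) * Bf (x ↑i) (x ↑i0)) *
                    Bf (x ↑i) (x ↑j) := by rw [h2]
              _ = Bf (x ↑i) (x ↑i0) *
                    (Bf (x (↑i0 + 1)) (x (↑i1 + 1)) * Bf (x ↑i) (x ↑j)) := by ring
      refine ⟨μ, fun i j => ?_⟩
      by_cases hij : i = j
      · subst hij
        have hdiagL : Bf (x (↑i + 1)) (x (↑i + 1)) = 0 := hqlt' i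
        have hdiagR : Bf (x ↑i) (x ↑i) = 0 := hqlt i
        rw [hdiagL, hdiagR, mul_zero]
      · rw [hμ, div_mul_eq_mul_div, eq_div_iff hB01.ne']
        calc Bf (x (↑i + 1)) (x (↑j + 1)) * Bf (x ↑i0) (x ↑i1)
            = Bf (x (↑i0 + 1)) (x (↑i1 + 1)) * Bf (x ↑i) (x ↑j) := hP2 i j hij
          _ = Bf (x (↑i0 + 1)) (x (↑i1 + 1)) * Bf (x ↑i) (x ↑j) := rfl
    · refine ⟨0, fun i j => ?_⟩
      have hij : i = j := by
        have hi := i.isLt; have hj := j.isLt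
        apply Fin.ext
        omega
      subst hij
      have hdiag : Bf (x (↑i + 1)) (x (↑i + 1)) = 0 := hqlt' i
      rw [hdiag, zero_mul]
  obtain ⟨μ, hKey⟩ := hKey
  -- quadratic form expansion
  have hqsum : ∀ (y : Fin r → EuclideanSpace ℝ (Fin (n + 1))) (c : Fin r → ℝ),
      qf (∑ i : Fin r, c i • y i) =
        ∑ i : Fin r, ∑ j : Fin r, c i * c j * Bf (y i) (y j) := by
    intro y c
    show BL (∑ i : Fin r, c i • y i) (∑ i : Fin r, c i • y i) = _
    have hL : BL (∑ i : Fin r, c i • y i) = ∑ i : Fin r, c i • BL (y i) := by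
      rw [map_sum]
      exact Finset.sum_congr rfl fun i _ => by rw [map_smul]
    rw [hL, LinearMap.sum_apply]
    refine Finset.sum_congr rfl fun i _ => ?_
    rw [LinearMap.smul_apply, map_sum, Finset.smul_sum]
    refine Finset.sum_congr rfl fun j _ => ?_
    rw [map_smul]
    simp only [smul_eq_mul, BL_apply]
    ring
  have hform : ∀ w ∈ S r, qf (Ψ w) = μ * qf w := by
    intro w hw
    rw [hSdef, Submodule.mem_span_range_iff_exists_fun] at hw
    obtain ⟨c, hc⟩ := hw
    have hΨw : Ψ w = ∑ i : Fin r, c i • x (↑i + 1) := by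
      rw [← hc, map_sum]
      refine Finset.sum_congr rfl fun i _ => ?_
      rw [map_smul, ← hxsucc]
    rw [hΨw, ← hc, hqsum, hqsum, Finset.mul_sum]
    refine Finset.sum_congr rfl fun i _ => ?_
    rw [Finset.mul_sum]
    refine Finset.sum_congr rfl fun j _ => ?_
    rw [hKey i j]
    ring
  have hpowW : ∀ m, ∀ w ∈ S r, (Ψ ^ m) w ∈ S r := by
    intro m
    induction m with
    | zero => intro w hw; simpa using hw
    | succ m ih =>
      intro w hw
      have hstep : (Ψ ^ (m + 1)) w = Ψ ((Ψ ^ m) w) := by rw [pow_succ']; rfl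
      rw [hstep]
      exact hWinv _ (ih w hw)
  have hqiter : ∀ m, ∀ w ∈ S r, qf ((Ψ ^ m) w) = μ ^ m * qf w := by
    intro m
    induction m with
    | zero => intro w hw; simp
    | succ m ih =>
      intro w hw
      have hstep : (Ψ ^ (m + 1)) w = Ψ ((Ψ ^ m) w) := by rw [pow_succ']; rfl
      rw [hstep, hform _ (hpowW m w hw), ih w hw, pow_succ]
      ring
  have h1 : qf ((Ψ ^ k) (x 0)) = μ ^ k * qf (x 0) := hqiter k (x 0) (hxW 0)
  have h2 : qf (x 0) = 0 := hq0 0 (by omega)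
  have h3 : (Ψ ^ k) (x 0) ∈ interior (lorentzCone n) := by
    rw [hx0]
    exact hstrict x₀ hx₀L hx₀0
  have h4 := qf_pos_of_interior h3
  rw [h1, h2, mul_zero] at h4
  exact lt_irrefl 0 h4
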